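/- If cone(B) is not strongly convex, i.e. cone(B) ∩ (−cone(B)) contains a nonzero vector, then D_B has Lebesgue measure zero. -/

import Mathlib

open Finset Real MeasureTheory

/-- `|x^b| = ∏_ν |x_ν|^{b_ν}`. -/
noncomputable def monAbs {d : ℕ} (x b : Fin d → ℝ) : ℝ := ∏ ν, |x ν| ^ (b ν)

/-- `cone(B)`. -/
def coneF {d : ℕ} (B : Finset (Fin d → ℝ)) : Set (Fin d → ℝ) :=
  {y | ∃ α : (Fin d → ℝ) → ℝ, (∀ b, 0 ≤ α b) ∧ y = ∑ b ∈ B, α b • b}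

/-- `D_S`. -/
noncomputable def Dom {d : ℕ} (S : Set (Fin d → ℝ)) : Set (Fin d → ℝ) :=
  {x | ∀ b ∈ S, monAbs x b ≤ 1}

/-- A measurable set in `ℝ^{n+1}` all of whose one-dimensional slices in direction `i`
are null is itself null. -/
lemma slice_null {n : ℕ} (i : Fin (n+1)) (A : Set (Fin (n+1) → ℝ)) (hA : MeasurableSet A)
    (h : ∀ y : Fin n → ℝ, volume {t : ℝ | i.insertNth t y ∈ A} = 0) :
    volume A = 0 := by
  have hmp := (MeasureTheory.measurePreserving_piFinSuccAbove
    (fun _ : Fin (n+1) => (volume : Measure ℝ)) i).symm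
  set e := (MeasurableEquiv.piFinSuccAbove (fun _ : Fin (n+1) => ℝ) i).symm with he
  have h1 : (volume : Measure (Fin (n+1) → ℝ)) A
      = ((volume : Measure ℝ).prod (Measure.pi fun _ : Fin n => volume)) (e ⁻¹' A) := by
    rw [volume_pi, ← hmp.map_eq, Measure.map_apply e.measurable hA]
  rw [h1, Measure.prod_apply_symm (e.measurable hA)]
  have h2 : ∀ y : Fin n → ℝ,
      (volume : Measure ℝ) ((fun t => (t, y)) ⁻¹' (e ⁻¹' A)) = 0 := by
    intro y
    have : ((fun t => (t, y)) ⁻¹' (e ⁻¹' A)) = {t : ℝ | i.insertNth t y ∈ A} := by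
      ext t
      simp [he, MeasurableEquiv.piFinSuccAbove_symm_apply, Fin.insertNthEquiv]
    rw [this]; exact h y
  simp only [h2]
  simp

/-- If `cone(B)` is not strongly convex, i.e. contains a nonzero `r` together with `-r`,
then `D_B` has Lebesgue measure zero. -/
theorem statement2 (d : ℕ) (B : Finset (Fin d → ℝ))
    (hB : ∀ b ∈ B, ∀ ν, ∃ q : ℚ, b ν = (q : ℝ))
    (r : Fin d → ℝ) (hr : r ≠ 0) (hr1 : r ∈ coneF B) (hr2 : -r ∈ coneF B) :
    volume (Dom (↑B : Set (Fin d → ℝ))) = 0 := by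
  cases d with
  | zero => exact absurd (funext fun ν => ν.elim0) hr
  | succ n =>
  obtain ⟨ν₀, hν₀⟩ : ∃ ν, r ν ≠ 0 := by
    by_contra h; push_neg at h; exact hr (funext h)
  set g : (Fin (n+1) → ℝ) → ℝ := fun x => ∑ ν, r ν * Real.log |x ν| with hg
  have hgmeas : Measurable g := by
    apply Finset.measurable_sum
    intro ν _
    exact (Real.measurable_log.comp (measurable_pi_apply ν).abs).const_mul _
  set N : Set (Fin (n+1) → ℝ) := ⋃ ν : Fin (n+1), {x : Fin (n+1) → ℝ | x ν = 0} with hN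
  set S : Set (Fin (n+1) → ℝ) := {x | g x = 0} with hS
  have hsub : Dom (↑B : Set (Fin (n+1) → ℝ)) ⊆ N ∪ S := by
    intro x hx
    by_cases hx0 : ∃ ν, x ν = 0
    · left; obtain ⟨ν, hν⟩ := hx0; exact Set.mem_iUnion.2 ⟨ν, hν⟩
    · push_neg at hx0
      right
      have habs : ∀ ν, 0 < |x ν| := fun ν => abs_pos.2 (hx0 ν)
      set L : (Fin (n+1) → ℝ) → ℝ := fun b => ∑ ν, b ν * Real.log |x ν| with hL
      have hLb : ∀ b ∈ B, L b ≤ 0 := by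
        intro b hb
        have hpos : 0 < monAbs x b :=
          Finset.prod_pos fun ν _ => Real.rpow_pos_of_pos (habs ν) _
        have hlog : Real.log (monAbs x b) = L b := by
          rw [monAbs, Real.log_prod (fun ν _ => (Real.rpow_pos_of_pos (habs ν) _).ne')]
          simp_rw [hL, Real.log_rpow (habs _)]
        have h1 := Real.log_nonpos hpos.le (hx b (by exact_mod_cast hb))
        rw [hlog] at h1; exact h1
      have hLcone : ∀ y ∈ coneF B, L y ≤ 0 := by
        rintro y ⟨α, hα, rfl⟩
        have heq : L (∑ b ∈ B, α b • b) = ∑ b ∈ B, α b * L b := by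
          simp only [hL, Finset.sum_apply, Pi.smul_apply, smul_eq_mul, Finset.sum_mul,
            Finset.mul_sum]
          rw [Finset.sum_comm]
          exact Finset.sum_congr rfl fun b _ => Finset.sum_congr rfl fun ν _ => by ring
        rw [heq]
        exact Finset.sum_nonpos fun b hb => mul_nonpos_of_nonneg_of_nonpos (hα b) (hLb b hb)
      have h1 := hLcone r hr1
      have h2 := hLcone (-r) hr2
      have hLneg : L (-r) = - L r := by
        simp [hL, neg_mul, Finset.sum_neg_distrib]
      have : L r = 0 := by rw [hLneg] at h2; linarith
      exact this
  refine measure_mono_null hsub (measure_union_null ?_ ?_)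
  · refine measure_iUnion_null fun ν => ?_
    refine slice_null ν _ ((measurable_pi_apply ν) (measurableSet_singleton 0)) fun y => ?_
    have : {t : ℝ | ν.insertNth t y ∈ {x : Fin (n+1) → ℝ | x ν = 0}} = {(0 : ℝ)} := by
      ext t; simp [Fin.insertNth_apply_same]
    rw [this]; exact measure_singleton 0
  · refine slice_null ν₀ _ (hgmeas (measurableSet_singleton 0)) fun y => ?_
    set c : ℝ := ∑ k : Fin n, r (ν₀.succAbove k) * Real.log |y k| with hc
    set a : ℝ := Real.exp (-c / r ν₀) with ha
    refine measure_mono_null (?_ : _ ⊆ ({0, a, -a} : Set ℝ)) ?_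
    · intro t ht
      simp only [Set.mem_setOf_eq, hS, hg] at ht
      rw [Fin.sum_univ_succAbove _ ν₀] at ht
      simp only [Fin.insertNth_apply_same, Fin.insertNth_apply_succAbove] at ht
      by_cases ht0 : t = 0
      · exact Or.inl ht0
      · have hlogt : Real.log |t| = -c / r ν₀ := by
          rw [eq_div_iff hν₀, hc]
          linarith [ht]
        have : |t| = a := by
          rw [ha, ← hlogt, Real.exp_log (abs_pos.2 ht0)]
        rcases abs_eq (le_of_lt (by rw [← this]; exact abs_pos.2 ht0)) |>.1 this with h | h
        · exact Or.inr (Or.inl h)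
        · exact Or.inr (Or.inr h)
    · exact (((Set.finite_singleton (-a)).insert a).insert 0).measure_zero _
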